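/- Let N ∈ ℝ^{(1+r)×(1+r)} be symmetric with block partition N = [[N₁₁, N₁₂],[N₂₁, N₂₂]] where N₁₁ ∈ ℝ and N₂₂ ∈ ℝ^{r×r} is negative definite, and suppose the Schur complement N|N₂₂ := N₁₁ - N₁₂N₂₂⁻¹N₂₁ is nonnegative. Let a ∈ ℝ and λ ∈ ℝ^r. Then λᵀz + a ≥ 0 for all z in the set Z = {z ∈ ℝ^r : (1,z)ᵀ N (1,z) ≥ 0} if and only if the matrix [[-λᵀN₂₂⁻¹N₂₁ + a, (N|N₂₂)^{1/2} λᵀ],[(N|N₂₂)^{1/2} λ, (λᵀN₂₂⁻¹N₂₁ - a) N₂₂]] is positive semidefinite. -/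

import Mathlib

open Matrix

private lemma stmt8_aux2 (s α t L Pv : ℝ) (hα : 0 ≤ α) (hPv : 0 ≤ Pv)
    (key : Real.sqrt s * |L| ≤ α * Real.sqrt Pv) :
    0 ≤ α * t ^ 2 + 2 * Real.sqrt s * t * L + α * Pv := by
  have e1 : -(Real.sqrt s * (|t| * |L|)) ≤ Real.sqrt s * (t * L) := by
    have h1 := neg_abs_le (t * L)
    have h2 := Real.sqrt_nonneg s
    have h3 := abs_mul t L
    nlinarith
  have e2 : Real.sqrt s * (|t| * |L|) ≤ α * Real.sqrt Pv * |t| := by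
    nlinarith [key, abs_nonneg t]
  have e3 : 2 * (α * Real.sqrt Pv * |t|) ≤ α * t ^ 2 + α * Pv := by
    nlinarith [mul_nonneg hα (sq_nonneg (|t| - Real.sqrt Pv)), Real.sq_sqrt hPv, sq_abs t]
  nlinarith

private lemma stmt8_aux1 (s α L Pw : ℝ) (hs : 0 ≤ s) (hα : 0 ≤ α) (hPw0 : 0 ≤ Pw)
    (hPws : Pw ≤ s) (hL0 : Pw = 0 → L = 0)
    (hdisc : discrim α (2 * Real.sqrt s * L) (α * Pw) ≤ 0) : 0 ≤ α + L := by
  rcases le_or_gt 0 L with h | h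
  · linarith
  · have hsqs : Real.sqrt s ^ 2 = s := Real.sq_sqrt hs
    rw [discrim] at hdisc
    have hb : (2 * Real.sqrt s * L) ^ 2 = 4 * s * L ^ 2 := by rw [mul_pow, mul_pow, hsqs]; ring
    have hkey : s * L ^ 2 ≤ α ^ 2 * Pw := by nlinarith
    rcases eq_or_lt_of_le hs with hs0 | hs0
    · have hPw : Pw = 0 := le_antisymm (by linarith) hPw0
      have := hL0 hPw
      linarith
    · have h1 : s * L ^ 2 ≤ α ^ 2 * s := by nlinarith
      have h2 : L ^ 2 ≤ α ^ 2 := by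
        have := (mul_le_mul_iff_of_pos_right hs0).mp (by linarith : L ^ 2 * s ≤ α ^ 2 * s)
        linarith
      nlinarith

/-- Specialized S-lemma (Lemma 2 of the paper). -/
theorem stmt_8 {r : ℕ} (N₁₁ : ℝ) (N₂₁ : Fin r → ℝ) (N₂₂ : Matrix (Fin r) (Fin r) ℝ)
    (hsym : N₂₂.IsSymm)
    (hneg : ∀ z : Fin r → ℝ, z ≠ 0 → z ⬝ᵥ N₂₂ *ᵥ z < 0)
    (hschur : 0 ≤ N₁₁ - N₂₁ ⬝ᵥ N₂₂⁻¹ *ᵥ N₂₁)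
    (a : ℝ) (lam : Fin r → ℝ) :
    (∀ z : Fin r → ℝ,
        0 ≤ (Sum.elim (fun _ : Fin 1 => (1 : ℝ)) z) ⬝ᵥ
            (Matrix.fromBlocks (Matrix.of fun _ _ => N₁₁)
              (Matrix.of fun _ j => N₂₁ j) (Matrix.of fun i _ => N₂₁ i) N₂₂) *ᵥ
            (Sum.elim (fun _ : Fin 1 => (1 : ℝ)) z) →
        0 ≤ lam ⬝ᵥ z + a)
    ↔ (Matrix.fromBlocks
        (Matrix.of fun _ _ : Fin 1 => -(lam ⬝ᵥ N₂₂⁻¹ *ᵥ N₂₁) + a)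
        (Matrix.of fun _ j => Real.sqrt (N₁₁ - N₂₁ ⬝ᵥ N₂₂⁻¹ *ᵥ N₂₁) * lam j)
        (Matrix.of fun i _ => Real.sqrt (N₁₁ - N₂₁ ⬝ᵥ N₂₂⁻¹ *ᵥ N₂₁) * lam i)
        ((lam ⬝ᵥ N₂₂⁻¹ *ᵥ N₂₁ - a) • N₂₂)).PosSemidef := by
  -- notation
  set s : ℝ := N₁₁ - N₂₁ ⬝ᵥ N₂₂⁻¹ *ᵥ N₂₁ with hs_def
  set c : Fin r → ℝ := -(N₂₂⁻¹ *ᵥ N₂₁) with hc_def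
  set α : ℝ := -(lam ⬝ᵥ N₂₂⁻¹ *ᵥ N₂₁) + a with hα_def
  have hαc : α = lam ⬝ᵥ c + a := by simp [hα_def, hc_def]
  have hcoef : lam ⬝ᵥ N₂₂⁻¹ *ᵥ N₂₁ - a = -α := by rw [hα_def]; ring
  -- P v = -(vᵀ N₂₂ v) ≥ 0
  set P : (Fin r → ℝ) → ℝ := fun v => -(v ⬝ᵥ N₂₂ *ᵥ v) with hP_def
  have hP0 : ∀ v, 0 ≤ P v := by
    intro v
    by_cases h : v = 0
    · simp [hP_def, h]
    · have := hneg v h; simp only [hP_def]; linarith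
  have hPpos : ∀ v, v ≠ 0 → 0 < P v := by
    intro v h; have := hneg v h; simp only [hP_def]; linarith
  have hPzero : ∀ v, P v ≤ 0 → v = 0 := by
    intro v h
    by_contra hv
    exact absurd h (not_le.mpr (hPpos v hv))
  have hPzero0 : P 0 = 0 := by simp [hP_def]
  -- invertibility of N₂₂
  have hherm : (-N₂₂).IsHermitian := by
    have : N₂₂.IsHermitian := by
      exact Matrix.isHermitian_iff_isSymm.mpr hsym
    exact this.neg
  have hpd : (-N₂₂).PosDef := by
    refine Matrix.PosDef.of_dotProduct_mulVec_pos hherm fun x hx => ?_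
    have := hneg x hx
    simp only [star_trivial, neg_mulVec, dotProduct_neg]
    linarith
  have hunit : IsUnit N₂₂.det := by
    have h1 : IsUnit (-N₂₂) := hpd.isUnit
    have h2 : IsUnit N₂₂ := by simpa using h1.neg
    exact (Matrix.isUnit_iff_isUnit_det _).mp h2
  have hNc : N₂₂ *ᵥ c = -N₂₁ := by
    rw [hc_def, mulVec_neg, mulVec_mulVec, Matrix.mul_nonsing_inv _ hunit, one_mulVec]
  -- symmetry of the bilinear form
  have hbil : ∀ u v : Fin r → ℝ, u ⬝ᵥ N₂₂ *ᵥ v = v ⬝ᵥ N₂₂ *ᵥ u := by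
    intro u v
    calc u ⬝ᵥ N₂₂ *ᵥ v = (u ᵥ* N₂₂) ⬝ᵥ v := by rw [dotProduct_mulVec]
      _ = (N₂₂ᵀ *ᵥ u) ⬝ᵥ v := by rw [mulVec_transpose]
      _ = (N₂₂ *ᵥ u) ⬝ᵥ v := by rw [hsym]
      _ = v ⬝ᵥ N₂₂ *ᵥ u := dotProduct_comm _ _
  -- completed-square identity for the constraint quadratic form
  have h7 : ∀ z : Fin r → ℝ,
      (Sum.elim (fun _ : Fin 1 => (1 : ℝ)) z) ⬝ᵥ
        (Matrix.fromBlocks (Matrix.of fun _ _ => N₁₁)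
          (Matrix.of fun _ j => N₂₁ j) (Matrix.of fun i _ => N₂₁ i) N₂₂) *ᵥ
        (Sum.elim (fun _ : Fin 1 => (1 : ℝ)) z) = s - P (z - c) := by
    intro z
    have e1 : (Sum.elim (fun _ : Fin 1 => (1 : ℝ)) z) ⬝ᵥ
        (Matrix.fromBlocks (Matrix.of fun _ _ => N₁₁)
          (Matrix.of fun _ j => N₂₁ j) (Matrix.of fun i _ => N₂₁ i) N₂₂) *ᵥ
        (Sum.elim (fun _ : Fin 1 => (1 : ℝ)) z)
        = N₁₁ + N₂₁ ⬝ᵥ z + (z ⬝ᵥ N₂₁ + z ⬝ᵥ N₂₂ *ᵥ z) := by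
      simp [fromBlocks_mulVec, sumElim_dotProduct_sumElim, mulVec, dotProduct, Fin.sum_univ_one,
        Finset.mul_sum, mul_add, Finset.sum_add_distrib, mul_comm]
    rw [e1]
    have e2 : (z - c) ⬝ᵥ N₂₂ *ᵥ (z - c)
        = z ⬝ᵥ N₂₂ *ᵥ z - 2 * (z ⬝ᵥ N₂₂ *ᵥ c) + c ⬝ᵥ N₂₂ *ᵥ c := by
      rw [sub_dotProduct, mulVec_sub, dotProduct_sub, dotProduct_sub, hbil c z]
      ring
    have e3 : z ⬝ᵥ N₂₂ *ᵥ c = -(z ⬝ᵥ N₂₁) := by rw [hNc, dotProduct_neg]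
    have e4 : c ⬝ᵥ N₂₂ *ᵥ c = N₂₁ ⬝ᵥ N₂₂⁻¹ *ᵥ N₂₁ := by
      rw [hNc, dotProduct_neg, hc_def, neg_dotProduct, neg_neg, dotProduct_comm]
    have e5 : N₂₁ ⬝ᵥ z = z ⬝ᵥ N₂₁ := dotProduct_comm _ _
    simp only [hP_def, e2, e3, e4, e5, hs_def]
    ring
  -- quadratic form of the block matrix on the right
  have h8 : ∀ (t : ℝ) (v : Fin r → ℝ),
      (Sum.elim (fun _ : Fin 1 => t) v) ⬝ᵥ
        (Matrix.fromBlocks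
          (Matrix.of fun _ _ : Fin 1 => α)
          (Matrix.of fun _ j => Real.sqrt s * lam j)
          (Matrix.of fun i _ => Real.sqrt s * lam i)
          ((-α) • N₂₂)) *ᵥ (Sum.elim (fun _ : Fin 1 => t) v)
      = α * t ^ 2 + 2 * Real.sqrt s * t * (lam ⬝ᵥ v) + α * P v := by
    intro t v
    have e : (Sum.elim (fun _ : Fin 1 => t) v) ⬝ᵥ
        (Matrix.fromBlocks
          (Matrix.of fun _ _ : Fin 1 => α)
          (Matrix.of fun _ j => Real.sqrt s * lam j)
          (Matrix.of fun i _ => Real.sqrt s * lam i)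
          ((-α) • N₂₂)) *ᵥ (Sum.elim (fun _ : Fin 1 => t) v)
        = α * t ^ 2 + 2 * Real.sqrt s * t * (lam ⬝ᵥ v) - α * (v ⬝ᵥ N₂₂ *ᵥ v) := by
      simp [fromBlocks_mulVec, sumElim_dotProduct_sumElim, mulVec, dotProduct, Fin.sum_univ_one,
        Finset.mul_sum, mul_add, Finset.sum_add_distrib, mul_comm, mul_left_comm]
      ring_nf
      have hs2 : ∀ x, t * lam x * v x * Real.sqrt s = t * Real.sqrt s * lam x * v x :=
        fun x => by ring
      simp only [hs2, ← Finset.sum_mul]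
      ring
    rw [e, hP_def]
    ring
  -- the matrix in the statement is the one used in h8
  have hQ : (Matrix.fromBlocks
        (Matrix.of fun _ _ : Fin 1 => α)
        (Matrix.of fun _ j => Real.sqrt s * lam j)
        (Matrix.of fun i _ => Real.sqrt s * lam i)
        ((lam ⬝ᵥ N₂₂⁻¹ *ᵥ N₂₁ - a) • N₂₂))
      = (Matrix.fromBlocks
          (Matrix.of fun _ _ : Fin 1 => α)
          (Matrix.of fun _ j => Real.sqrt s * lam j)
          (Matrix.of fun i _ => Real.sqrt s * lam i)
          ((-α) • N₂₂)) := by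
    rw [hcoef]
  rw [hQ]
  constructor
  · -- forward direction
    intro H
    have hα0 : 0 ≤ α := by
      have hm : (0:ℝ) ≤ s - P (c - c) := by
        rw [sub_self, hPzero0, sub_zero]; exact hschur
      have h := H c
      rw [h7 c] at h
      have h := h hm
      rw [← hαc] at h
      exact h
    -- key inequality
    have key : ∀ v : Fin r → ℝ, Real.sqrt s * |lam ⬝ᵥ v| ≤ α * Real.sqrt (P v) := by
      intro v
      by_cases hv : v = 0
      · simp [hv, hPzero0]
      · have hpv : 0 < P v := hPpos v hv
        set L : ℝ := lam ⬝ᵥ v with hL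
        set τ : ℝ := if 0 ≤ L then -Real.sqrt (s / P v) else Real.sqrt (s / P v) with hτ
        have hτsq : τ ^ 2 = s / P v := by
          rcases le_or_gt 0 L with h | h
          · rw [hτ, if_pos h, neg_pow]
            simp [Real.sq_sqrt (div_nonneg hschur hpv.le)]
          · rw [hτ, if_neg (not_le.mpr h), Real.sq_sqrt (div_nonneg hschur hpv.le)]
        have hPτ : P (τ • v) = s := by
          have e : (τ • v) ⬝ᵥ N₂₂ *ᵥ (τ • v) = τ ^ 2 * (v ⬝ᵥ N₂₂ *ᵥ v) := by
            rw [smul_dotProduct, mulVec_smul, dotProduct_smul]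
            simp only [smul_eq_mul]; ring
          have e2 : P (τ • v) = τ ^ 2 * P v := by
            simp only [hP_def, e]; ring
          rw [e2, hτsq, div_mul_cancel₀ _ hpv.ne']
        have hmem : (0:ℝ) ≤ s - P ((c + τ • v) - c) := by
          rw [add_sub_cancel_left, hPτ, sub_self]
        have hH := H (c + τ • v)
        rw [h7 _] at hH
        have hres := hH hmem
        have hlz : lam ⬝ᵥ (c + τ • v) = lam ⬝ᵥ c + τ * L := by
          rw [dotProduct_add, dotProduct_smul, smul_eq_mul, hL]
        rw [hlz] at hres
        have hres' : 0 ≤ α + τ * L := by rw [hαc]; linarith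
        have hτL : τ * L = -(Real.sqrt (s / P v) * |L|) := by
          rcases le_or_gt 0 L with h | h
          · rw [hτ, if_pos h, abs_of_nonneg h]; ring
          · rw [hτ, if_neg (not_le.mpr h), abs_of_neg h]; ring
        have h1 : Real.sqrt (s / P v) * |L| ≤ α := by rw [hτL] at hres'; linarith
        have h2 : Real.sqrt (s / P v) = Real.sqrt s / Real.sqrt (P v) :=
          Real.sqrt_div hschur (P v)
        have hsp : 0 < Real.sqrt (P v) := Real.sqrt_pos.mpr hpv
        calc Real.sqrt s * |L| = (Real.sqrt s / Real.sqrt (P v)) * |L| * Real.sqrt (P v) := by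
              field_simp
          _ = Real.sqrt (s / P v) * |L| * Real.sqrt (P v) := by rw [h2]
          _ ≤ α * Real.sqrt (P v) := by
              have := mul_le_mul_of_nonneg_right h1 hsp.le
              linarith
    refine Matrix.PosSemidef.of_dotProduct_mulVec_nonneg ?_ ?_
    · -- Hermitian
      rw [Matrix.IsHermitian]
      ext i j
      rcases i with i | i <;> rcases j with j | j <;>
        simp [conjTranspose_apply, fromBlocks, Matrix.smul_apply]
      · exact Or.inl (hsym.apply i j)
    · -- nonnegativity
      intro x
      have hx : x = Sum.elim (fun _ : Fin 1 => x (Sum.inl 0)) (x ∘ Sum.inr) := by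
        funext i
        rcases i with i | i
        · simp [Subsingleton.elim i 0]
        · simp
      rw [star_trivial, hx, h8]
      exact stmt8_aux2 s α (x (Sum.inl 0)) (lam ⬝ᵥ (x ∘ Sum.inr)) (P (x ∘ Sum.inr)) hα0
        (hP0 _) (key _)
  · -- backward direction
    intro hpsd z hz
    rw [h7 z] at hz
    have hPw : P (z - c) ≤ s := by linarith
    have hα0 : 0 ≤ α := by
      have h := hpsd.dotProduct_mulVec_nonneg (Sum.elim (fun _ : Fin 1 => (1:ℝ)) 0)
      rw [star_trivial, h8] at h
      simpa [hPzero0] using h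
    have hlz : lam ⬝ᵥ z + a = α + lam ⬝ᵥ (z - c) := by
      rw [hαc, dotProduct_sub]
      ring
    rw [hlz]
    have hquad : ∀ t : ℝ, 0 ≤ α * (t * t) + (2 * Real.sqrt s * (lam ⬝ᵥ (z - c))) * t
        + α * P (z - c) := by
      intro t
      have h := hpsd.dotProduct_mulVec_nonneg (Sum.elim (fun _ : Fin 1 => t) (z - c))
      rw [star_trivial, h8] at h
      calc (0:ℝ) ≤ α * t ^ 2 + 2 * Real.sqrt s * t * (lam ⬝ᵥ (z - c)) + α * P (z - c) := h
        _ = α * (t * t) + (2 * Real.sqrt s * (lam ⬝ᵥ (z - c))) * t + α * P (z - c) := by ring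
    have hdisc := discrim_le_zero hquad
    refine stmt8_aux1 s α (lam ⬝ᵥ (z - c)) (P (z - c)) hschur hα0 (hP0 _) hPw ?_ hdisc
    intro hPw0
    have : z - c = 0 := hPzero _ (le_of_eq hPw0)
    rw [this, dotProduct_zero]
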